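/- arXiv:0905.2926 — 2 statements merged into one kernel-verified Lean document; each statement's English description precedes it below -/
import Mathlib

section
/- Let the rebalancing rule depend only on the ratio C/G, i.e. the risky weight is w(t, C/G), let the risky asset have independent log-increments, and let the guarantee be updated at lock-in dates by G_{I+1} = G_I·f(C_I/G_I, C_{I+1}/G_I) for a positive function f. If a European payoff has the homogeneous form P(C,G) = G·P̃(C/G), then the fair price at each lock-in date is homogeneous: V(t_I, C, G) = G·Ṽ(t_I, C/G) for some function Ṽ, where prices are defined by backward risk-neutral discounted expectations V(t_I, C_I, G_I) = e^{-r(t_{I+1}-t_I)}·E[V(t_{I+1}, C_{I+1}, G_{I+1}) | C_I, G_I]. -/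
open MeasureTheory

/-- CPPI with profit lock-in: if the one-period transition density `Φ I` of the normalized
value `C/G` depends only on the ratio `C/G`, the guarantee is updated by
`G' = G · f(C/G, C'/G)` with `f > 0`, prices are given by backward discounted expectations,
and the terminal payoff is homogeneous `P(C,G) = G·P̃(C/G)`, then the fair price at each
lock-in date is homogeneous: `V(t_I, C, G) = G·Ṽ(t_I, C/G)`. -/
theorem lockin_price_homogeneous
    (n : ℕ) (Φ : ℕ → ℝ → ℝ → ℝ) (f : ℝ → ℝ → ℝ) (hf : ∀ x z, 0 < f x z)
    (d : ℕ → ℝ) (Pt : ℝ → ℝ) (V : ℕ → ℝ → ℝ → ℝ)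
    (hterm : ∀ C G : ℝ, V n C G = G * Pt (C / G))
    (hrec : ∀ I < n, ∀ C G : ℝ, 0 < G →
      V I C G = d I * ∫ z : ℝ, Φ I (C / G) z * V (I + 1) (G * z) (G * f (C / G) z)) :
    ∀ I ≤ n, ∃ Vt : ℝ → ℝ, ∀ C G : ℝ, 0 < G → V I C G = G * Vt (C / G) := by
  have key : ∀ k I : ℕ, I + k = n → ∃ Vt : ℝ → ℝ,
      ∀ C G : ℝ, 0 < G → V I C G = G * Vt (C / G) := by
    intro k
    induction k with
    | zero =>
      intro I hI
      simp only [Nat.add_zero] at hI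
      subst hI
      exact ⟨Pt, fun C G _ => hterm C G⟩
    | succ k ih =>
      intro I hI
      obtain ⟨Vt', hVt'⟩ := ih (I + 1) (by omega)
      refine ⟨fun x => d I * ∫ z : ℝ, Φ I x z * (f x z * Vt' (z / f x z)), ?_⟩
      intro C G hG
      have hIn : I < n := by omega
      rw [hrec I hIn C G hG]
      have hGne : G ≠ 0 := ne_of_gt hG
      have : ∀ z : ℝ, Φ I (C / G) z * V (I + 1) (G * z) (G * f (C / G) z)
          = G * (Φ I (C / G) z * (f (C / G) z * Vt' (z / f (C / G) z))) := by
        intro z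
        have hpos : 0 < G * f (C / G) z := mul_pos hG (hf _ _)
        rw [hVt' (G * z) (G * f (C / G) z) hpos]
        have : G * z / (G * f (C / G) z) = z / f (C / G) z := by
          rw [mul_div_mul_left _ _ hGne]
        rw [this]; ring
      simp only [this]
      rw [MeasureTheory.integral_const_mul]
      ring
  intro I hI
  exact key (n - I) I (by omega)
end

section
/- If the payoff is homogeneous of degree α, P(C,G) = G^α·P̃(C/G), then under the same hypotheses the price at lock-in dates satisfies V(t_I, C, G) = G^α·Ṽ(t_I, C/G), where Ṽ satisfies the recursion with modified kernel Φ̃(x,y) = ∫ δ(y - z/f(x,z))·f(x,z)^α·Φ(x,z) dz. -/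
open MeasureTheory

/-- Homogeneity of degree `α`: if the payoff is `P(C,G) = G^α·P̃(C/G)` then the price at
lock-in dates satisfies `V(t_I, C, G) = G^α·Ṽ(t_I, C/G)`, where `Ṽ` satisfies the one-
dimensional recursion with modified kernel `Φ̃(x,y) = ∫ δ(y - z/f(x,z))·f(x,z)^α·Φ(x,z) dz`. -/
theorem lockin_price_homogeneous_degree_alpha
    (n : ℕ) (α : ℝ) (Φ : ℕ → ℝ → ℝ → ℝ) (f : ℝ → ℝ → ℝ) (hf : ∀ x z, 0 < f x z)
    (d : ℕ → ℝ) (Pt : ℝ → ℝ) (V : ℕ → ℝ → ℝ → ℝ)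
    (hterm : ∀ C G : ℝ, V n C G = G ^ α * Pt (C / G))
    (hrec : ∀ I < n, ∀ C G : ℝ, 0 < G →
      V I C G = d I * ∫ z : ℝ, Φ I (C / G) z * V (I + 1) (G * z) (G * f (C / G) z)) :
    ∃ Vt : ℕ → ℝ → ℝ,
      (∀ I ≤ n, ∀ C G : ℝ, 0 < G → V I C G = G ^ α * Vt I (C / G)) ∧
      (∀ I < n, ∀ x : ℝ,
        Vt I x = d I * ∫ z : ℝ, f x z ^ α * Φ I x z * Vt (I + 1) (z / f x z)) := by
  have key : ∀ m I, I + m = n → ∀ C G : ℝ, 0 < G → V I C G = G ^ α * V I (C / G) 1 := by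
    intro m
    induction m with
    | zero =>
      intro I hI C G hG
      simp only [Nat.add_zero] at hI
      subst hI
      rw [hterm, hterm]
      simp [Real.one_rpow]
    | succ m ih =>
      intro I hI C G hG
      have hIn : I < n := by omega
      have h1 : I + 1 + m = n := by omega
      rw [hrec I hIn C G hG, hrec I hIn (C / G) 1 one_pos]
      simp only [div_one, one_mul]
      have e1 : ∀ z : ℝ, V (I + 1) (G * z) (G * f (C / G) z) =
          G ^ α * (f (C / G) z ^ α * V (I + 1) (z / f (C / G) z) 1) := by
        intro z
        rw [ih (I + 1) h1 (G * z) _ (mul_pos hG (hf _ z)),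
          mul_div_mul_left z (f (C / G) z) (ne_of_gt hG),
          Real.mul_rpow hG.le (hf _ z).le, mul_assoc]
      have e2 : ∀ z : ℝ, V (I + 1) z (f (C / G) z) =
          f (C / G) z ^ α * V (I + 1) (z / f (C / G) z) 1 := by
        intro z
        rw [ih (I + 1) h1 z _ (hf _ z)]
      have hint : (∫ z : ℝ, Φ I (C / G) z * V (I + 1) (G * z) (G * f (C / G) z)) =
          G ^ α * ∫ z : ℝ, Φ I (C / G) z * V (I + 1) z (f (C / G) z) := by
        rw [← MeasureTheory.integral_const_mul]
        refine integral_congr_ae (Filter.Eventually.of_forall fun z => ?_)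
        dsimp only
        rw [e1 z, e2 z]; ring
      rw [hint]; ring
  refine ⟨fun I x => V I x 1, ?_, ?_⟩
  · intro I hI C G hG
    exact key (n - I) I (by omega) C G hG
  · intro I hI x
    show V I x 1 = d I * ∫ z : ℝ, f x z ^ α * Φ I x z * V (I + 1) (z / f x z) 1
    rw [hrec I hI x 1 one_pos]
    simp only [div_one, one_mul]
    refine congrArg (fun t => d I * t) ?_
    refine integral_congr_ae (Filter.Eventually.of_forall fun z => ?_)
    dsimp only
    rw [key (n - (I + 1)) (I + 1) (by omega) z (f x z) (hf x z)]
    ring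
end
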